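/- Let g ∈ ℂ[[x]][y] be nonzero with deg_y(g) < e_1. Then for every j = 1, …, s and every σ ∈ ℕ, ϑ_{ι_j}(∂^σ g/∂y^σ) ≥ ϑ_{ι_j}(g) − σ·e_jλ_1 (with the convention that +∞ is greater than or equal to every value). -/

import Mathlib

noncomputable def psOrdQ (f : PowerSeries ℂ) : WithTop ℚ :=
  WithTop.map (fun m : ℕ => (m : ℚ)) f.order

/-- Substitution x ↦ t^e on power series (for e ≥ 1). -/
noncomputable def expandPS (e : ℕ) (f : PowerSeries ℂ) : PowerSeries ℂ :=
  PowerSeries.mk fun n => if e ∣ n then PowerSeries.coeff (R := ℂ) (n / e) f else 0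

/-- Truncated parametrization pullback on ℂ[[x]][y]: x ↦ t^e, y ↦ yi. -/
noncomputable def iotaPS (e : ℕ) (yi : PowerSeries ℂ) (g : Polynomial (PowerSeries ℂ)) :
    PowerSeries ℂ :=
  ∑ ℓ ∈ g.support, expandPS e (g.coeff ℓ) * yi ^ ℓ

lemma ps_le_order_sum {ι : Type*} (s : Finset ι) (f : ι → PowerSeries ℂ) (c : ℕ∞)
    (h : ∀ i ∈ s, c ≤ (f i).order) : c ≤ (∑ i ∈ s, f i).order := by
  apply PowerSeries.le_order
  intro n hn
  rw [map_sum]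
  refine Finset.sum_eq_zero fun i hi => ?_
  exact PowerSeries.coeff_of_lt_order n (lt_of_lt_of_le hn (h i hi))

lemma ps_order_sum_eq {ι : Type*} [DecidableEq ι] (s : Finset ι) (f : ι → PowerSeries ℂ)
    (v : ι → ℕ) (hv : ∀ i ∈ s, (f i).order = (v i : ℕ∞))
    (hinj : ∀ i ∈ s, ∀ j ∈ s, v i = v j → i = j) :
    (∑ i ∈ s, f i).order = s.inf fun i => ((v i : ℕ∞)) := by
  revert hv hinj
  induction s using Finset.induction_on with
  | empty => intro _ _; simp
  | @insert a s ha ih =>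
    intro hv hinj
    have hva := hv a (Finset.mem_insert_self a s)
    have hs := ih (fun i hi => hv i (Finset.mem_insert_of_mem hi))
      (fun i hi j hj => hinj i (Finset.mem_insert_of_mem hi) j (Finset.mem_insert_of_mem hj))
    rw [Finset.sum_insert ha, Finset.inf_insert]
    rcases s.eq_empty_or_nonempty with rfl | hne
    · simp [hva]
    · obtain ⟨i₀, hi₀, hinf⟩ := Finset.exists_mem_eq_inf s hne fun i => ((v i : ℕ∞))
      have hne2 : (f a).order ≠ (∑ i ∈ s, f i).order := by
        rw [hva, hs, hinf]
        intro hcontra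
        have hvv : v a = v i₀ := by exact_mod_cast hcontra
        have := hinj a (Finset.mem_insert_self a s) i₀ (Finset.mem_insert_of_mem hi₀) hvv
        exact ha (this ▸ hi₀)
      rw [PowerSeries.order_add_of_order_ne _ _ hne2, hva, hs]

lemma order_expandPS {m : ℕ} (hm : 0 < m) (f : PowerSeries ℂ) {n : ℕ}
    (hf : f.order = (n : ℕ∞)) : (expandPS m f).order = ((m * n : ℕ) : ℕ∞) := by
  obtain ⟨h1, h2⟩ := PowerSeries.order_eq_nat.mp hf
  rw [PowerSeries.order_eq_nat]
  constructor
  · simp only [expandPS, PowerSeries.coeff_mk]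
    rw [if_pos (dvd_mul_right m n), Nat.mul_div_cancel_left n hm]
    exact h1
  · intro i hi
    simp only [expandPS, PowerSeries.coeff_mk]
    split
    · next hd =>
      obtain ⟨q, rfl⟩ := hd
      rw [Nat.mul_div_cancel_left q hm]
      exact h2 q (lt_of_mul_lt_mul_left hi (Nat.zero_le m))
    · rfl

lemma order_nsmul_ps (n : ℕ) (hn : n ≠ 0) (f : PowerSeries ℂ) : (n • f).order = f.order := by
  rw [nsmul_eq_mul, ← map_natCast (PowerSeries.C (R := ℂ)) n, PowerSeries.order_mul]
  have h0 : (PowerSeries.C (R := ℂ) (n : ℂ)).order = ((0 : ℕ) : ℕ∞) := by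
    rw [PowerSeries.order_eq_nat]
    constructor
    · simp [Nat.cast_ne_zero.mpr hn]
    · intro i hi; omega
  rw [h0]
  simp

lemma order_pow_ps (f : PowerSeries ℂ) {n : ℕ} (hf : f.order = (n : ℕ∞)) (ℓ : ℕ) :
    (f ^ ℓ).order = ((ℓ * n : ℕ) : ℕ∞) := by
  induction ℓ with
  | zero => simp [PowerSeries.order_one]
  | succ ℓ ih =>
    rw [pow_succ, PowerSeries.order_mul, ih, hf]
    norm_cast
    ring

lemma withtop_cast_le {a b : ℕ∞} (n : ℕ) (h : a ≤ b + (n : ℕ∞)) :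
    WithTop.map (fun m : ℕ => (m : ℚ)) a ≤
      WithTop.map (fun m : ℕ => (m : ℚ)) b + (((n : ℚ)) : WithTop ℚ) := by
  cases b with
  | top =>
    rw [show WithTop.map (fun m : ℕ => (m : ℚ)) (⊤ : ℕ∞) = ⊤ from rfl, top_add]
    exact le_top
  | coe b =>
    cases a with
    | top =>
      exfalso
      have h2 : ((b : ℕ∞) + (n : ℕ∞)) = ⊤ := top_le_iff.mp h
      rw [← Nat.cast_add] at h2
      exact (ENat.coe_ne_top _) h2
    | coe a =>
      have hab : a ≤ b + n := by exact_mod_cast h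
      show (((a : ℚ)) : WithTop ℚ) ≤ (((b : ℚ)) : WithTop ℚ) + ((n : ℚ) : WithTop ℚ)
      rw [← WithTop.coe_add]
      exact WithTop.coe_le_coe.mpr (by exact_mod_cast hab)

theorem stmt_16
    (s : ℕ) (hs : 1 ≤ s)
    (lam : ℕ → ℚ) (hlam1 : 1 < lam 1)
    (hlam_mono : ∀ i, 1 ≤ i → i < s → lam i < lam (i + 1))
    (M : ℕ → AddSubgroup ℚ)
    (hM : ∀ i, M i = AddSubgroup.closure ({1} ∪ lam '' Set.Icc 1 i))
    (hlamM : ∀ i, 1 ≤ i → i ≤ s → lam i ∉ M (i - 1))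
    (kk : ℕ → ℕ)
    (hkk : ∀ i, 1 ≤ i → i ≤ s →
      IsLeast {m : ℕ | 0 < m ∧ (m : ℚ) * lam i ∈ M (i - 1)} (kk i))
    (e : ℕ → ℕ) (he0 : e 0 = 1)
    (he : ∀ i, 1 ≤ i → i ≤ s → e i = kk i * e (i - 1))
    (gam : ℕ → ℕ → ℚ)
    (hgam1 : ∀ j, 1 ≤ j → j ≤ s → gam j 1 = (e j : ℚ) * lam 1)
    (hgam : ∀ j, 1 ≤ j → j ≤ s → ∀ ℓ, 1 ≤ ℓ → ℓ ≤ j - 1 →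
      gam j (ℓ + 1) = (kk ℓ : ℚ) * gam j ℓ - (e j : ℚ) * lam ℓ + (e j : ℚ) * lam (ℓ + 1))
    (c : ℕ → ℂ) (hc : ∀ ℓ, 1 ≤ ℓ → ℓ ≤ s → c ℓ ≠ 0)
    (φ : ℕ → Polynomial ℂ)
    (hφ0 : ∀ ℓ, 1 ≤ ℓ → ℓ ≤ s → (φ ℓ).coeff 0 = 0)
    (hφsupp : ∀ ℓ, 1 ≤ ℓ → ℓ ≤ s → ∀ a ∈ (φ ℓ).support,
      ∃ m ∈ M ℓ, (a : ℚ) = (e s : ℚ) * m)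
    (hφord : ∀ ℓ, 1 ≤ ℓ → ℓ ≤ s → ∀ a ∈ (φ ℓ).support, (e s : ℚ) * lam ℓ < (a : ℚ))
    (hφdeg : ∀ ℓ, 1 ≤ ℓ → ℓ < s → ∀ a ∈ (φ ℓ).support, (a : ℚ) < (e s : ℚ) * lam (ℓ + 1))
    (E : ℕ → ℕ → ℕ)
    (hE : ∀ i, 1 ≤ i → i ≤ s → ∀ ℓ, 1 ≤ ℓ → ℓ ≤ i → (E i ℓ : ℚ) = (e i : ℚ) * lam ℓ)
    (φs : ℕ → ℕ → Polynomial ℂ)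
    (hφs : ∀ i, 1 ≤ i → i ≤ s → ∀ ℓ, 1 ≤ ℓ → ℓ ≤ i →
      (φs i ℓ).comp (Polynomial.X ^ (e s / e i)) = φ ℓ)
    (Y : ℕ → Polynomial ℂ)
    (hY : ∀ i, 1 ≤ i → i ≤ s →
      Y i = ∑ ℓ ∈ Finset.Icc 1 i, (Polynomial.C (c ℓ) * Polynomial.X ^ E i ℓ + φs i ℓ)) :
    ∀ g : Polynomial (PowerSeries ℂ), g ≠ 0 → g.natDegree < e 1 →
      ∀ j, 1 ≤ j → j ≤ s → ∀ σ : ℕ, 1 ≤ σ →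
        psOrdQ (iotaPS (e j) ((Y j : Polynomial ℂ) : PowerSeries ℂ) g) ≤
          psOrdQ (iotaPS (e j) ((Y j : Polynomial ℂ) : PowerSeries ℂ)
              (Polynomial.derivative^[σ] g)) +
            (((σ : ℚ) * ((e j : ℚ) * lam 1) : ℚ) : WithTop ℚ) := by
  -- positivity of the e i
  have hepos : ∀ i, i ≤ s → 0 < e i := by
    intro i
    induction i with
    | zero => intro _; simp [he0]
    | succ p ih =>
      intro hps
      rw [he (p+1) (by omega) hps]
      have hk := (hkk (p+1) (by omega) hps).1.1
      simp only [Nat.add_sub_cancel]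
      exact Nat.mul_pos hk (ih (by omega))
  -- monotonicity of lam
  have hlamle : ∀ ℓ, 1 ≤ ℓ → ℓ ≤ s → lam 1 ≤ lam ℓ := by
    intro ℓ
    induction ℓ with
    | zero => intro h; omega
    | succ p ih =>
      intro _ hps
      by_cases hp : p = 0
      · subst hp; exact le_refl _
      · exact le_trans (ih (by omega) (by omega))
          (le_of_lt (hlam_mono p (by omega) (by omega)))
  have hlamlt : ∀ ℓ, 2 ≤ ℓ → ℓ ≤ s → lam 1 < lam ℓ := by
    intro ℓ h2 hls
    obtain ⟨p, rfl⟩ : ∃ p, ℓ = p + 1 := ⟨ℓ - 1, by omega⟩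
    exact lt_of_le_of_lt (hlamle p (by omega) (by omega)) (hlam_mono p (by omega) (by omega))
  intro g hg hdeg j hj1 hjs σ hσ
  have hejpos : 0 < e j := hepos j hjs
  have hejQ : ((e j : ℚ)) ≠ 0 := Nat.cast_ne_zero.mpr hejpos.ne'
  have hE1Q : ((E j 1 : ℕ) : ℚ) = (e j : ℚ) * lam 1 := hE j hj1 hjs 1 le_rfl hj1
  -- divisibility e j ∣ e s
  have hdvd : ∀ i, j ≤ i → i ≤ s → e j ∣ e i := by
    intro i
    induction i with
    | zero =>
      intro h1 _
      obtain rfl : j = 0 := Nat.le_zero.mp h1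
      exact dvd_refl _
    | succ p ih =>
      intro hji hps
      rcases Nat.eq_or_lt_of_le hji with rfl | hlt
      · exact dvd_refl _
      · rw [he (p+1) (by omega) hps, Nat.add_sub_cancel]
        exact Dvd.dvd.mul_left (ih (by omega) (by omega)) _
  have hdvds : e j ∣ e s := hdvd s hjs le_rfl
  have hmm : e j * (e s / e j) = e s := Nat.mul_div_cancel' hdvds
  have hmpos : 0 < e s / e j := by
    have := hepos s le_rfl
    rcases Nat.eq_zero_or_pos (e s / e j) with h0 | h
    · rw [h0, Nat.mul_zero] at hmm; omega
    · exact h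
  -- support of φs j ℓ lies strictly above E j 1
  have hφsupp_gt : ∀ ℓ, 1 ≤ ℓ → ℓ ≤ j → ∀ n ∈ (φs j ℓ).support, E j 1 < n := by
    intro ℓ h1ℓ hℓj n hnsupp
    have hexp : Polynomial.expand ℂ (e s / e j) (φs j ℓ) = φ ℓ := by
      rw [Polynomial.expand_eq_comp_X_pow]
      exact hφs j hj1 hjs ℓ h1ℓ hℓj
    have hmemφ : (e s / e j) * n ∈ (φ ℓ).support := by
      rw [Polynomial.mem_support_iff, ← hexp, Polynomial.coeff_expand_mul' hmpos]
      exact Polynomial.mem_support_iff.mp hnsupp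
    have hgt := hφord ℓ h1ℓ (hℓj.trans hjs) ((e s / e j) * n) hmemφ
    have hle1 : lam 1 ≤ lam ℓ := hlamle ℓ h1ℓ (hℓj.trans hjs)
    have hesq : ((e s : ℕ) : ℚ) = (e j : ℚ) * ((e s / e j : ℕ) : ℚ) := by
      exact_mod_cast congrArg (fun x : ℕ => (x : ℚ)) hmm.symm
    have hmq : (0 : ℚ) < ((e s / e j : ℕ) : ℚ) := by exact_mod_cast hmpos
    have hesposQ : (0 : ℚ) < (e s : ℚ) := by exact_mod_cast hepos s le_rfl
    have h5 : ((e s / e j : ℕ) : ℚ) * ((e j : ℚ) * lam 1) < ((e s / e j : ℕ) : ℚ) * (n : ℚ) := by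
      calc ((e s / e j : ℕ) : ℚ) * ((e j : ℚ) * lam 1) = (e s : ℚ) * lam 1 := by
            rw [hesq]; ring
        _ ≤ (e s : ℚ) * lam ℓ := mul_le_mul_of_nonneg_left hle1 (le_of_lt hesposQ)
        _ < (((e s / e j) * n : ℕ) : ℚ) := hgt
        _ = ((e s / e j : ℕ) : ℚ) * (n : ℚ) := by push_cast; ring
    have h6 : (e j : ℚ) * lam 1 < (n : ℚ) := lt_of_mul_lt_mul_left h5 (le_of_lt hmq)
    have h7 : ((E j 1 : ℕ) : ℚ) < (n : ℚ) := by rw [hE1Q]; exact h6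
    exact_mod_cast h7
  -- coefficients of Y j below and at E j 1
  have hYcoeff : ∀ n : ℕ, n ≤ E j 1 → (Y j).coeff n = if n = E j 1 then c 1 else 0 := by
    intro n hn
    rw [hY j hj1 hjs, Polynomial.finset_sum_coeff]
    rw [Finset.sum_eq_single_of_mem 1 (Finset.mem_Icc.mpr ⟨le_refl 1, hj1⟩)]
    · rw [Polynomial.coeff_add, Polynomial.coeff_C_mul, Polynomial.coeff_X_pow]
      have hφ1 : (φs j 1).coeff n = 0 := by
        by_contra hne
        exact absurd (hφsupp_gt 1 le_rfl hj1 n (Polynomial.mem_support_iff.mpr hne)) (by omega)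
      rw [hφ1, add_zero]
      by_cases hcase : n = E j 1 <;> simp [hcase]
    · intro ℓ hℓ hℓ1
      obtain ⟨h1ℓ, hℓj⟩ := Finset.mem_Icc.mp hℓ
      have h2ℓ : 2 ≤ ℓ := by omega
      rw [Polynomial.coeff_add, Polynomial.coeff_C_mul, Polynomial.coeff_X_pow]
      have hEne : n ≠ E j ℓ := by
        have h1 : ((E j ℓ : ℕ) : ℚ) = (e j : ℚ) * lam ℓ := hE j hj1 hjs ℓ h1ℓ hℓj
        have h2 : lam 1 < lam ℓ := hlamlt ℓ h2ℓ (hℓj.trans hjs)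
        intro hcontra
        have h3 : ((n : ℕ) : ℚ) ≤ ((E j 1 : ℕ) : ℚ) := by exact_mod_cast hn
        rw [hcontra, h1, hE1Q] at h3
        have hejposQ : (0 : ℚ) < (e j : ℚ) := by exact_mod_cast hejpos
        nlinarith
      have hφℓ : (φs j ℓ).coeff n = 0 := by
        by_contra hne
        exact absurd (hφsupp_gt ℓ h1ℓ hℓj n (Polynomial.mem_support_iff.mpr hne)) (by omega)
      simp [hEne, hφℓ]
  set Yps : PowerSeries ℂ := ((Y j : Polynomial ℂ) : PowerSeries ℂ) with hYps
  have hordY : Yps.order = ((E j 1 : ℕ) : ℕ∞) := by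
    rw [PowerSeries.order_eq_nat]
    constructor
    · rw [hYps, Polynomial.coeff_coe, hYcoeff (E j 1) le_rfl, if_pos rfl]
      exact hc 1 le_rfl hs
    · intro i hi
      rw [hYps, Polynomial.coeff_coe, hYcoeff i (le_of_lt hi), if_neg (Nat.ne_of_lt hi)]
  -- order of a generic term
  have hterm : ∀ (a : PowerSeries ℂ), a ≠ 0 → ∀ ℓ : ℕ,
      (expandPS (e j) a * Yps ^ ℓ).order
        = ((e j * a.order.toNat + ℓ * E j 1 : ℕ) : ℕ∞) := by
    intro a ha ℓ
    have hfin : a.order ≠ ⊤ := fun h => ha (PowerSeries.order_eq_top.mp h)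
    have haord : a.order = ((a.order.toNat : ℕ) : ℕ∞) := (ENat.coe_toNat hfin).symm
    rw [PowerSeries.order_mul, order_expandPS hejpos a haord, order_pow_ps Yps hordY ℓ]
    norm_cast
  -- distinctness of candidate orders
  have hdodd : ∀ ℓ' ℓ mv m' : ℕ, ℓ' < ℓ → ℓ < e 1 →
      e j * mv + ℓ * E j 1 = e j * m' + ℓ' * E j 1 → False := by
    intro ℓ' ℓ mv m' hlt hub heq
    have hq : (e j : ℚ) * mv + (ℓ : ℚ) * ((e j : ℚ) * lam 1)
        = (e j : ℚ) * m' + (ℓ' : ℚ) * ((e j : ℚ) * lam 1) := by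
      have h0 : ((e j * mv + ℓ * E j 1 : ℕ) : ℚ) = ((e j * m' + ℓ' * E j 1 : ℕ) : ℚ) := by
        exact_mod_cast congrArg (fun x : ℕ => (x : ℚ)) heq
      push_cast at h0
      rw [hE1Q] at h0
      linarith
    have h2 : (e j : ℚ) * (((ℓ : ℚ) - ℓ') * lam 1) = (e j : ℚ) * ((m' : ℚ) - mv) := by
      linear_combination hq
    have h3 : ((ℓ : ℚ) - ℓ') * lam 1 = (m' : ℚ) - mv := mul_left_cancel₀ hejQ h2
    set d : ℕ := ℓ - ℓ' with hd
    have hdpos : 0 < d := by omega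
    have hdub : d < e 1 := by omega
    have hdq : ((d : ℕ) : ℚ) = (ℓ : ℚ) - (ℓ' : ℚ) := by
      rw [hd]; push_cast [Nat.cast_sub hlt.le]; ring
    have hmem : ((d : ℕ) : ℚ) * lam 1 ∈ M 0 := by
      rw [hM 0]
      have h1m : (1 : ℚ) ∈ AddSubgroup.closure ({1} ∪ lam '' Set.Icc 1 0) :=
        AddSubgroup.subset_closure (Set.mem_union_left _ rfl)
      have heqz : ((d : ℕ) : ℚ) * lam 1 = ((m' : ℤ) - (mv : ℤ)) • (1 : ℚ) := by
        rw [hdq, h3, zsmul_eq_mul]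
        push_cast
        ring
      rw [heqz]
      exact AddSubgroup.zsmul_mem _ h1m _
    have hleast := hkk 1 le_rfl hs
    have hlb : kk 1 ≤ d := hleast.2 ⟨hdpos, hmem⟩
    have he1 : e 1 = kk 1 := by
      rw [he 1 le_rfl hs]
      simp [he0]
    omega
  -- the value function
  have hinjv : ∀ ℓ ∈ g.support, ∀ ℓ' ∈ g.support,
      e j * (g.coeff ℓ).order.toNat + ℓ * E j 1
        = e j * (g.coeff ℓ').order.toNat + ℓ' * E j 1 → ℓ = ℓ' := by
    intro ℓ hℓ ℓ' hℓ' hvv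
    by_contra hne
    have hb : ℓ < e 1 := lt_of_le_of_lt (Polynomial.le_natDegree_of_mem_supp ℓ hℓ) hdeg
    have hb' : ℓ' < e 1 := lt_of_le_of_lt (Polynomial.le_natDegree_of_mem_supp ℓ' hℓ') hdeg
    rcases Nat.lt_or_ge ℓ ℓ' with h | h
    · exact hdodd ℓ ℓ' _ _ h hb' hvv.symm
    · exact hdodd ℓ' ℓ _ _ (lt_of_le_of_ne h (Ne.symm hne)) hb hvv
  have hA := ps_order_sum_eq g.support
    (fun ℓ => expandPS (e j) (g.coeff ℓ) * Yps ^ ℓ)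
    (fun ℓ => e j * (g.coeff ℓ).order.toNat + ℓ * E j 1)
    (fun ℓ hℓ => hterm _ (Polynomial.mem_support_iff.mp hℓ) ℓ)
    hinjv
  have hAeq : iotaPS (e j) Yps g
      = ∑ ℓ ∈ g.support, expandPS (e j) (g.coeff ℓ) * Yps ^ ℓ := rfl
  obtain ⟨ℓ₀, hℓ₀, hinf⟩ := Finset.exists_mem_eq_inf g.support
    (Polynomial.support_nonempty.mpr hg)
    (fun ℓ => (((e j * (g.coeff ℓ).order.toNat + ℓ * E j 1 : ℕ) : ℕ∞)))
  set N : ℕ := e j * (g.coeff ℓ₀).order.toNat + ℓ₀ * E j 1 with hNdef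
  have hN : (iotaPS (e j) Yps g).order = ((N : ℕ) : ℕ∞) := by
    rw [hAeq, hA, hinf]
  have hNle : ∀ ℓ ∈ g.support, N ≤ e j * (g.coeff ℓ).order.toNat + ℓ * E j 1 := by
    intro ℓ hℓ
    have h1 : ((N : ℕ) : ℕ∞)
        ≤ (((e j * (g.coeff ℓ).order.toNat + ℓ * E j 1 : ℕ) : ℕ∞)) := by
      rw [← hinf]
      exact Finset.inf_le hℓ
    exact_mod_cast h1
  -- order bound for the derivative
  have hBle : ((N - σ * E j 1 : ℕ) : ℕ∞)
      ≤ (iotaPS (e j) Yps (Polynomial.derivative^[σ] g)).order := by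
    rw [show iotaPS (e j) Yps (Polynomial.derivative^[σ] g)
        = ∑ ℓ ∈ (Polynomial.derivative^[σ] g).support,
            expandPS (e j) ((Polynomial.derivative^[σ] g).coeff ℓ) * Yps ^ ℓ from rfl]
    apply ps_le_order_sum
    intro ℓ hℓ
    have hcoeff : (Polynomial.derivative^[σ] g).coeff ℓ
        = (ℓ + σ).descFactorial σ • g.coeff (ℓ + σ) :=
      Polynomial.coeff_iterate_derivative g ℓ
    have hne : (Polynomial.derivative^[σ] g).coeff ℓ ≠ 0 := Polynomial.mem_support_iff.mp hℓ
    have hgne : g.coeff (ℓ + σ) ≠ 0 := by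
      intro h0; apply hne; rw [hcoeff, h0, smul_zero]
    have hdne : (ℓ + σ).descFactorial σ ≠ 0 := by
      intro h0; apply hne; rw [hcoeff, h0, zero_smul]
    have hordeq : ((Polynomial.derivative^[σ] g).coeff ℓ).order = (g.coeff (ℓ + σ)).order := by
      rw [hcoeff, order_nsmul_ps _ hdne]
    have hterm' := hterm _ hne ℓ
    rw [hordeq] at hterm'
    rw [hterm']
    have hvN := hNle (ℓ + σ) (Polynomial.mem_support_iff.mpr hgne)
    rw [add_mul] at hvN
    have hnat : N - σ * E j 1 ≤ e j * (g.coeff (ℓ + σ)).order.toNat + ℓ * E j 1 := by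
      apply tsub_le_iff_right.mpr
      rw [add_assoc]
      exact hvN
    exact_mod_cast hnat
  have hfinal : (iotaPS (e j) Yps g).order
      ≤ (iotaPS (e j) Yps (Polynomial.derivative^[σ] g)).order + ((σ * E j 1 : ℕ) : ℕ∞) := by
    rw [hN]
    calc ((N : ℕ) : ℕ∞) ≤ ((N - σ * E j 1 + σ * E j 1 : ℕ) : ℕ∞) := by
          exact_mod_cast (le_tsub_add : N ≤ N - σ * E j 1 + σ * E j 1)
      _ = ((N - σ * E j 1 : ℕ) : ℕ∞) + ((σ * E j 1 : ℕ) : ℕ∞) := by push_cast; rfl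
      _ ≤ _ := add_le_add_left hBle _
  have hconst : ((σ : ℚ) * ((e j : ℚ) * lam 1) : ℚ) = ((σ * E j 1 : ℕ) : ℚ) := by
    push_cast [hE1Q]
    ring
  rw [hconst]
  exact withtop_cast_le _ hfinal
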